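/- For integers n, i, j with i ≤ n-2 and any integer k, the sum over p ≥ j of (-1)^p · C(k - p + 1, n-1) · C(n-2-i, p-j) equals (-1)^j · C(k - n + i - j + 3, i+1). -/

import Mathlib

lemma aux_diff (m : ℕ) : ∀ (x : ℤ) (r : ℕ),
    ∑ q ∈ Finset.range (m + 1),
      (-1 : ℤ) ^ q * (Nat.choose m q : ℤ) * Ring.choose (x - q) (r + m)
    = Ring.choose (x - m) r := by
  induction m with
  | zero => intro x r; simp
  | succ m ih =>
    intro x r
    have split : ∀ q, (Nat.choose (m + 1) q : ℤ)
        = (Nat.choose m q : ℤ) + (if q = 0 then 0 else (Nat.choose m (q - 1) : ℤ)) := by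
      intro q
      cases q with
      | zero => simp
      | succ q => simp [Nat.choose_succ_succ, Nat.cast_add, add_comm]
    have expand : ∑ q ∈ Finset.range (m + 2),
        (-1 : ℤ) ^ q * (Nat.choose (m + 1) q : ℤ) * Ring.choose (x - q) (r + (m + 1))
        = (∑ q ∈ Finset.range (m + 2),
            (-1 : ℤ) ^ q * (Nat.choose m q : ℤ) * Ring.choose (x - q) (r + (m + 1)))
          + ∑ q ∈ Finset.range (m + 2),
            (-1 : ℤ) ^ q * (if q = 0 then 0 else (Nat.choose m (q - 1) : ℤ))
              * Ring.choose (x - q) (r + (m + 1)) := by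
      rw [← Finset.sum_add_distrib]
      refine Finset.sum_congr rfl fun q _ => ?_
      rw [split q]; ring
    have first : ∑ q ∈ Finset.range (m + 2),
        (-1 : ℤ) ^ q * (Nat.choose m q : ℤ) * Ring.choose (x - q) (r + (m + 1))
        = Ring.choose (x - m) (r + 1) := by
      rw [Finset.sum_range_succ, Nat.choose_succ_self]
      have := ih x (r + 1)
      simp only [← add_assoc, add_right_comm r 1 m] at this ⊢
      simp [this]
    have second : ∑ q ∈ Finset.range (m + 2),
        (-1 : ℤ) ^ q * (if q = 0 then 0 else (Nat.choose m (q - 1) : ℤ))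
          * Ring.choose (x - q) (r + (m + 1))
        = - Ring.choose (x - 1 - m) (r + 1) := by
      rw [Finset.sum_range_succ']
      simp only [Nat.add_sub_cancel, if_neg (Nat.succ_ne_zero _), if_pos rfl]
      have : ∀ q : ℕ, (-1 : ℤ) ^ (q + 1) * (Nat.choose m q : ℤ) * Ring.choose (x - (q + 1)) (r + (m + 1))
          = -((-1 : ℤ) ^ q * (Nat.choose m q : ℤ) * Ring.choose (x - 1 - q) ((r + 1) + m)) := by
        intro q
        have h1 : x - ((q : ℤ) + 1) = x - 1 - q := by ring
        have h2 : r + (m + 1) = (r + 1) + m := by ring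
        rw [h1, h2, pow_succ]; ring
      rw [Finset.sum_congr rfl fun q _ => by push_cast; rw [this q]]
      rw [Finset.sum_neg_distrib, ih (x - 1) (r + 1)]
      simp
    rw [expand, first, second]
    have pascal := Ring.choose_succ_succ (x - 1 - m) r
    have hx : x - 1 - (m : ℤ) + 1 = x - m := by ring
    rw [hx] at pascal
    have hx2 : x - ((m : ℤ) + 1) = x - 1 - m := by ring
    push_cast
    rw [hx2]
    linarith [pascal]

/-- for integers `n, i, j` with `i ≤ n-2` and any integer `k`,
`∑_{p ≥ j} (-1)^p C(k-p+1, n-1) C(n-2-i, p-j) = (-1)^j C(k-n+i-j+3, i+1)`,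
with `C` the polynomial binomial coefficient (`Ring.choose` on `ℤ`);
the sum is supported on `j ≤ p ≤ j + (n-2-i)`. -/
theorem stmt1 (n i j : ℕ) (hn : 2 ≤ n) (hi : i ≤ n - 2) (k : ℤ) :
    ∑ p ∈ Finset.Icc j (j + (n - 2 - i)),
      (-1 : ℤ) ^ p * Ring.choose (k - p + 1) (n - 1) * (Nat.choose (n - 2 - i) (p - j) : ℤ)
    = (-1 : ℤ) ^ j * Ring.choose (k - n + i - j + 3) (i + 1) := by
  set m := n - 2 - i with hm
  have hrm : n - 1 = (i + 1) + m := by omega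
  have reindex : ∑ p ∈ Finset.Icc j (j + m),
      (-1 : ℤ) ^ p * Ring.choose (k - p + 1) (n - 1) * (Nat.choose m (p - j) : ℤ)
      = ∑ q ∈ Finset.range (m + 1),
        (-1 : ℤ) ^ (j + q) * Ring.choose (k - (j + q) + 1) (n - 1) * (Nat.choose m q : ℤ) := by
    refine Finset.sum_nbij' (fun p => p - j) (fun q => j + q) ?_ ?_ ?_ ?_ ?_
    · intro p hp; simp only [Finset.mem_Icc] at hp; simp only [Finset.mem_range]; omega
    · intro q hq; simp only [Finset.mem_range] at hq; simp only [Finset.mem_Icc]; omega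
    · intro p hp; simp only [Finset.mem_Icc] at hp; omega
    · intro q hq; omega
    · intro p hp; simp only [Finset.mem_Icc] at hp
      have h1 : j + (p - j) = p := by omega
      have h2 : ((j : ℤ) + (p - j : ℕ)) = (p : ℤ) := by push_cast [Nat.cast_sub hp.1]; ring
      rw [h1, h2]
  rw [reindex]
  have key := aux_diff m (k - j + 1) (i + 1)
  have step : ∑ q ∈ Finset.range (m + 1),
      (-1 : ℤ) ^ (j + q) * Ring.choose (k - (j + q) + 1) (n - 1) * (Nat.choose m q : ℤ)
      = (-1 : ℤ) ^ j * ∑ q ∈ Finset.range (m + 1),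
        (-1 : ℤ) ^ q * (Nat.choose m q : ℤ) * Ring.choose (k - j + 1 - q) ((i + 1) + m) := by
    rw [Finset.mul_sum]
    refine Finset.sum_congr rfl fun q _ => ?_
    have h1 : k - ((j : ℤ) + q) + 1 = k - j + 1 - q := by ring
    rw [h1, hrm, pow_add]
    ring
  rw [step, key]
  congr 2
  have hmz : (m : ℤ) = n - 2 - i := by
    rw [hm]; push_cast [Nat.cast_sub (by omega : i ≤ n - 2), Nat.cast_sub hn]; ring
  rw [hmz]; ring
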